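/- The set of complex numbers t₀ for which there exist polynomials A, B ∈ ℂ[X] with B ≠ 0 satisfying A² − (X¹² + X⁴ + t₀)·B² = X⁴ − 1 is infinite. -/

import Mathlib

open Polynomial
set_option maxHeartbeats 1000000

namespace Pell14

private lemma arith_x7 {t x s : ℝ} (ht : 0 < t) (hs0 : 0 < s) (hs294 : s^2 ≤ 9/4)
    (hx0 : 0 < x) (hinv : x^2*s^2 = 4 - 4*x + 4*t*s) : 7/10 ≤ x := by
  by_contra h
  push_neg at h
  have p1 : 0 < x*(7/10 - x) := mul_pos hx0 (by linarith)
  have p2 : x^2*s^2 ≤ x^2*(9/4) :=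
    mul_le_mul_of_nonneg_left hs294 (sq_nonneg x)
  have p3 : 0 < t*s := mul_pos ht hs0
  linarith [p1, p2, p3, hinv]

private lemma arith_st5 {s ts tσ : ℝ} (h0 : 0 ≤ tσ)
    (h1 : tσ ≤ ts) (h2 : ts ≤ 3/40) (h3 : 0 ≤ s^2) :
    64 + (816/25)*s^2 ≤ (4 + (12/5)*s^2 + 10*ts)*(16 - 32*tσ) := by
  have hts0 : 0 ≤ ts := le_trans h0 h1
  have w1 : (384/5)*s^2*tσ ≤ (384/5)*s^2*(3/40) :=
    mul_le_mul_of_nonneg_left (le_trans h1 h2) (by positivity)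
  have w2 : 320*ts*tσ ≤ 320*ts*(3/40) :=
    mul_le_mul_of_nonneg_left (le_trans h1 h2) (by positivity)
  have w3 : 128*tσ ≤ 128*ts := by linarith
  linarith [w1, w2, w3, hts0]

private lemma arith_key_low {a u : ℝ} (ha0 : 0 < a) (ha4 : a ≤ 4) (hu0 : 0 < u) :
    4*(a^2*u^2) ≤ 4*(a + 4*u)^2 - 4*a^2 := by
  have haa : a*a ≤ 4*4 := mul_le_mul ha4 ha4 ha0.le (by norm_num)
  have hsq : a^2 = a*a := sq a
  have ha16 : a^2 ≤ 16 := by linarith [haa, hsq]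
  have k1 : 0 ≤ (64 - 4*a^2)*u^2 := mul_nonneg (by linarith) (sq_nonneg u)
  have k2 : 0 ≤ a*u := mul_nonneg ha0.le hu0.le
  linarith [k1, k2]

private lemma arith_key_up {a u s t σ : ℝ} (ha : a = 4 - 4*(t*σ))
    (htσ0 : 0 ≤ t*σ) (htσs : t*σ ≤ t*s) (hts : t*s ≤ 3/40)
    (hu0 : 0 < u) (hus2 : 4 ≤ u*s^2) :
    4*(a + 4*u)^2 - 4*a^2 ≤ (4 + (12/5)*s^2 + 10*(t*s))*(a^2*u^2) := by
  have ha0 : 0 < a := by rw [ha]; linarith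
  have ha4 : a ≤ 4 := by rw [ha]; linarith
  have hs2 : (0:ℝ) ≤ s^2 := sq_nonneg s
  have hR0 : (0:ℝ) < 4 + (12/5)*s^2 + 10*(t*s) := by linarith [le_trans htσ0 htσs]
  have st1 : (16 - 32*(t*σ)) ≤ a^2 := by rw [ha]; linarith [sq_nonneg (t*σ)]
  have st3 : (4 + (12/5)*s^2 + 10*(t*s))*(16 - 32*(t*σ))
      ≤ (4 + (12/5)*s^2 + 10*(t*s))*a^2 := mul_le_mul_of_nonneg_left st1 hR0.le
  have st5 : 64 + (816/25)*s^2 ≤ (4 + (12/5)*s^2 + 10*(t*s))*(16 - 32*(t*σ)) :=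
    arith_st5 htσ0 htσs hts hs2
  have st6 : (64 + (816/25)*s^2)*u^2 ≤ ((4 + (12/5)*s^2 + 10*(t*s))*a^2)*u^2 :=
    mul_le_mul_of_nonneg_right (le_trans st5 st3) (sq_nonneg u)
  have w4 : a*u ≤ 4*u := mul_le_mul_of_nonneg_right ha4 hu0.le
  have w5 : 4*u ≤ u*s^2*u := mul_le_mul_of_nonneg_right hus2 hu0.le
  have st7 : 32*(a*u) + 64*u^2 ≤ (64 + (816/25)*s^2)*u^2 := by
    linarith [w4, w5, mul_nonneg (sq_nonneg s) (sq_nonneg u)]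
  linarith [st6, st7]

/- ## The one-step analytic lemma -/

lemma step_main {t x s u σ x' s' : ℝ} (ht : 0 < t) (ht20 : t ≤ 1/20)
    (hs4 : 4*t ≤ s) (hs32 : s ≤ 3/2) (hx0 : 0 < x) (hx1 : x ≤ 1)
    (hinv : x^2*s^2 = 4 - 4*x + 4*t*s)
    (hu : u = x + 4/s^2) (hσ : σ = s - 4*t/u^2)
    (hx' : x' = u - 4/σ^2) (hs' : s' = σ + 4*t/x'^2) :
    0 < x' ∧ x' ≤ 1 ∧ s + 4*t ≤ s' ∧ s' ≤ s + 4*t + (12/5)*s^2*t + 10*t^2*s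
      ∧ x'^2*s'^2 = 4 - 4*x' + 4*t*s' ∧ 0 < σ := by
  have hs0 : 0 < s := lt_of_lt_of_le (by linarith) hs4
  have hs2pos : (0:ℝ) < s^2 := by positivity
  have hs294 : s^2 ≤ 9/4 := by
    have : s*s ≤ (3/2)*(3/2) := mul_le_mul hs32 hs32 hs0.le (by norm_num)
    calc s^2 = s*s := sq s
      _ ≤ 9/4 := by linarith
  have hts : t*s ≤ 3/40 := by
    have : t*s ≤ (1/20)*(3/2) := mul_le_mul ht20 hs32 hs0.le (by norm_num)
    linarith
  have hts0 : 0 < t*s := mul_pos ht hs0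
  have hx7 : 7/10 ≤ x := arith_x7 ht hs0 hs294 hx0 hinv
  -- u facts
  have hu4s : (16/9:ℝ) ≤ 4/s^2 := by
    rw [le_div_iff₀ hs2pos]; linarith
  have hu125 : (12/5:ℝ) ≤ u := by rw [hu]; linarith
  have hu0 : 0 < u := by linarith
  have hu2pos : (0:ℝ) < u^2 := by positivity
  have hus2 : u*s^2 = x*s^2 + 4 := by
    rw [hu]; field_simp
  have hus2ge4 : (4:ℝ) ≤ u*s^2 := by
    have h1 : (7/10)*s^2 ≤ x*s^2 := mul_le_mul_of_nonneg_right hx7 (sq_nonneg s)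
    have h2 : (0:ℝ) ≤ (7/10)*s^2 := by positivity
    linarith [hus2]
  -- σ facts
  have hσs : σ ≤ s := by
    rw [hσ]; have : 0 ≤ 4*t/u^2 := by positivity
    linarith
  have hσu2 : σ*u^2 = s*u^2 - 4*t := by
    rw [hσ]; field_simp
  have hu2144 : (144/25:ℝ) ≤ u^2 := by
    have h1 : (12/5:ℝ)*(12/5) ≤ u*u := mul_le_mul hu125 hu125 (by norm_num) hu0.le
    calc (144/25:ℝ) = (12/5)*(12/5) := by norm_num
      _ ≤ u*u := h1
      _ = u^2 := (sq u).symm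
  have h4tu2 : 4*t/u^2 ≤ (25/36)*t := by
    rw [div_le_iff₀ hu2pos]
    have := mul_le_mul_of_nonneg_left hu2144 ht.le
    linarith [this]
  have hσ45 : (4/5)*s ≤ σ := by
    rw [hσ]; linarith [h4tu2]
  have hσ0 : 0 < σ := by
    have : 0 < (4/5)*s := by positivity
    linarith
  have hσ2pos : (0:ℝ) < σ^2 := by positivity
  have htσs : t*σ ≤ t*s := mul_le_mul_of_nonneg_left hσs ht.le
  have htσ0 : 0 < t*σ := mul_pos ht hσ0
  -- invariant (B)
  have hB : u^2*s^2 = 4 + 4*u + 4*t*s := by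
    have h2 : (u^2*s^2)*s^2 = (4 + 4*u + 4*t*s)*s^2 := by
      linear_combination (u*s^2 + x*s^2) * hus2 + s^2 * hinv
    exact mul_right_cancel₀ (ne_of_gt hs2pos) h2
  -- invariant (C)
  have hC : u^2*σ^2 = 4 + 4*u - 4*t*σ := by
    have h2 : (u^2*σ^2)*u^2 = (4 + 4*u - 4*t*σ)*u^2 := by
      linear_combination (σ*u^2 + s*u^2) * hσu2 + u^2 * hB
    exact mul_right_cancel₀ (ne_of_gt hu2pos) h2
  -- x' product identity
  have hx'prod : x'*(u*σ^2) = 4 - 4*t*σ := by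
    rw [hx']
    have h1 : (u - 4/σ^2)*(u*σ^2) = u^2*σ^2 - 4*u := by field_simp
    rw [h1]; linarith [hC]
  have ha37 : (37/10:ℝ) ≤ 4 - 4*t*σ := by linarith [htσs, hts]
  have huσ2pos : 0 < u*σ^2 := by positivity
  have hx'0 : 0 < x' := by
    by_contra h
    push_neg at h
    have := mul_nonpos_of_nonpos_of_nonneg h huσ2pos.le
    linarith [hx'prod]
  have hx'2pos : (0:ℝ) < x'^2 := by positivity
  -- invariant (D)
  have hD : x'^2*σ^2 = 4 - 4*x' - 4*t*σ := by
    have hx'σ2 : x'*σ^2 = u*σ^2 - 4 := by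
      rw [hx']; field_simp
    have h2 : (x'^2*σ^2)*σ^2 = (4 - 4*x' - 4*t*σ)*σ^2 := by
      linear_combination (x'*σ^2 + u*σ^2) * hx'σ2 + σ^2 * hC
    exact mul_right_cancel₀ (ne_of_gt hσ2pos) h2
  have hx'1 : x' ≤ 1 := by
    have h1 : 0 < x'^2*σ^2 := mul_pos hx'2pos hσ2pos
    linarith [hD, htσ0]
  -- invariant (A')
  have hs'x2 : s'*x'^2 = σ*x'^2 + 4*t := by
    rw [hs']; field_simp
  have hs'σ : σ ≤ s' := by
    rw [hs']; have : 0 ≤ 4*t/x'^2 := by positivity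
    linarith
  have hs'0 : 0 < s' := lt_of_lt_of_le hσ0 hs'σ
  have hA' : x'^2*s'^2 = 4 - 4*x' + 4*t*s' := by
    have h2 : (x'^2*s'^2)*x'^2 = (4 - 4*x' + 4*t*s')*x'^2 := by
      linear_combination (s'*x'^2 + σ*x'^2) * hs'x2 + x'^2 * hD
    exact mul_right_cancel₀ (ne_of_gt hx'2pos) h2
  -- increments
  have ha0 : 0 < 4 - 4*(t*σ) := by linarith
  have ha2pos : (0:ℝ) < (4 - 4*(t*σ))^2 := by positivity
  have hprod : x'*(u*σ^2) = 4 - 4*(t*σ) := by linear_combination hx'prod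
  have hx'sq : x'^2*(u*σ^2)^2 = (4 - 4*(t*σ))^2 := by
    linear_combination (x'*(u*σ^2) + (4 - 4*(t*σ))) * hprod
  have e1 : 4*t/x'^2 = 4*t*(u*σ^2)^2/(4 - 4*(t*σ))^2 := by
    rw [div_eq_div_iff hx'2pos.ne' ha2pos.ne']
    linear_combination (-(4*t))*hx'sq
  have hincr : s' - s = 4*t/x'^2 - 4*t/u^2 := by
    rw [hs']; linarith [hσ]
  have hexp : u^2*σ^2 = (4 - 4*(t*σ)) + 4*u := by linarith [hC]
  have h6 : 4*t*(u*σ^2)^2/(4 - 4*(t*σ))^2 - 4*t/u^2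
      = t*(4*((4 - 4*(t*σ)) + 4*u)^2 - 4*(4 - 4*(t*σ))^2)/((4 - 4*(t*σ))^2*u^2) := by
    rw [show (4*((4 - 4*(t*σ)) + 4*u)^2 : ℝ) = 4*(u^2*σ^2)^2 by rw [hexp]]
    rw [div_sub_div _ _ ha2pos.ne' hu2pos.ne', div_eq_div_iff (mul_pos ha2pos hu2pos).ne' (mul_pos ha2pos hu2pos).ne']
    ring
  -- lower bound on increment
  have hlow : s + 4*t ≤ s' := by
    have key := arith_key_low ha0 (by linarith) hu0
    have h3 : 4*t ≤ t*(4*((4 - 4*(t*σ)) + 4*u)^2 - 4*(4 - 4*(t*σ))^2)/((4 - 4*(t*σ))^2*u^2) := by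
      rw [le_div_iff₀ (by positivity : (0:ℝ) < (4 - 4*(t*σ))^2*u^2)]
      have h5 := mul_le_mul_of_nonneg_left key ht.le
      linarith [h5]
    linarith [hincr, e1, h6, h3]
  -- upper bound on increment
  have hup : s' ≤ s + 4*t + (12/5)*s^2*t + 10*t^2*s := by
    have key := arith_key_up rfl htσ0.le htσs hts hu0 hus2ge4
    have h3 : t*(4*((4 - 4*(t*σ)) + 4*u)^2 - 4*(4 - 4*(t*σ))^2)/((4 - 4*(t*σ))^2*u^2)
        ≤ t*(4 + (12/5)*s^2 + 10*(t*s)) := by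
      rw [div_le_iff₀ (by positivity : (0:ℝ) < (4 - 4*(t*σ))^2*u^2)]
      have h5 := mul_le_mul_of_nonneg_left key ht.le
      linarith [h5]
    have hfin : s' - s ≤ t*(4 + (12/5)*s^2 + 10*(t*s)) := by
      rw [hincr, e1, h6]; exact h3
    linarith [hfin]
  exact ⟨hx'0, hx'1, hlow, hup, hA', hσ0⟩

end Pell14


namespace Pell14

/-- cap lemma : the upper bound keeps `s ≤ 3/2`. -/
private lemma cap_lemma {z : ℝ} (h0 : 0 < z) (h14 : z ≤ 1/4) :
    4*z*(1+8*z^2) ≤ 3/2 := by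
  have h1 : z^2 ≤ 1/16 := by nlinarith
  have h2 : 1+8*z^2 ≤ 3/2 := by linarith
  have h3 : (4*z)*(1+8*z^2) ≤ (4*z)*(3/2) := by
    apply mul_le_mul_of_nonneg_left h2 (by linarith)
  linarith

/-- propagation of the upper bound. -/
private lemma upper_prop {z t s s' : ℝ} (ht : 0 < t) (htz : t ≤ z)
    (hz : z + t ≤ 1/4) (hs0 : 0 ≤ s) (hsu : s ≤ 4*z*(1+8*z^2))
    (hstep : s' ≤ s + 4*t + (12/5)*s^2*t + 10*t^2*s) :
    s' ≤ 4*(z+t)*(1+8*(z+t)^2) := by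
  have hz0 : 0 < z := lt_of_lt_of_le ht htz
  have h116 : z^2 ≤ 1/16 := by nlinarith
  have hS : s ≤ 4*z + 32*z^3 := by nlinarith [hsu]
  have hSb0 : (0:ℝ) ≤ 4*z + 32*z^3 := by positivity
  have hS2 : s^2 ≤ (4*z+32*z^3)^2 := by nlinarith [hS, hs0]
  have m1 : z^4 ≤ (1/16)*z^2 := by nlinarith [sq_nonneg z, h116]
  have m2 : z^6 ≤ (1/256)*z^2 := by nlinarith [sq_nonneg z, sq_nonneg (z^2), h116, m1]
  have m3 : t*z^3 ≤ (1/16)*(t*z) := by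
    have : z^3 ≤ (1/16)*z := by nlinarith [h116, hz0.le]
    nlinarith [mul_le_mul_of_nonneg_left this ht.le]
  have brk : (12/5)*(4*z+32*z^3)^2 + 10*t*(4*z+32*z^3) ≤ 96*z^2+96*z*t+32*t^2 := by
    have htz2 : t*z ≤ z*z := by nlinarith [mul_le_mul_of_nonneg_right htz hz0.le]
    nlinarith [m1, m2, m3, sq_nonneg t, mul_pos ht hz0]
  have tbrk := mul_le_mul_of_nonneg_left brk ht.le
  have h12 : (12/5)*s^2*t ≤ (12/5)*(4*z+32*z^3)^2*t :=
    mul_le_mul_of_nonneg_right (mul_le_mul_of_nonneg_left hS2 (by norm_num)) ht.le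
  have h10 : 10*t^2*s ≤ 10*t^2*(4*z+32*z^3) :=
    mul_le_mul_of_nonneg_left hS (by positivity)
  nlinarith [tbrk, h12, h10, hS]

end Pell14

namespace Pell14

/- ## The chain -/

noncomputable def uF (t x s : ℝ) : ℝ := x + 4/s^2
noncomputable def σF (t x s : ℝ) : ℝ := s - 4*t/(uF t x s)^2
noncomputable def xF (t x s : ℝ) : ℝ := uF t x s - 4/(σF t x s)^2
noncomputable def sF (t x s : ℝ) : ℝ := σF t x s + 4*t/(xF t x s)^2

noncomputable def ch (t : ℝ) : ℕ → ℝ × ℝ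
  | 0 => (1, 4*t)
  | (j+1) => (xF t (ch t j).1 (ch t j).2, sF t (ch t j).1 (ch t j).2)

lemma ch_succ (t : ℝ) (j : ℕ) :
    ch t (j+1) = (xF t (ch t j).1 (ch t j).2, sF t (ch t j).1 (ch t j).2) := rfl

/-- Bounds on the chain.  -/
lemma chain_bounds {k : ℕ} {t : ℝ} (ht : 0 < t) (ht20 : t ≤ 1/20)
    (htk : ((k:ℝ)+1)*t ≤ 1/4) : ∀ j, j ≤ k →
    0 < (ch t j).1 ∧ (ch t j).1 ≤ 1 ∧
    4*(((j:ℝ)+1)*t) ≤ (ch t j).2 ∧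
    (ch t j).2 ≤ 4*(((j:ℝ)+1)*t)*(1 + 8*(((j:ℝ)+1)*t)^2) ∧
    (ch t j).1^2*(ch t j).2^2 = 4 - 4*(ch t j).1 + 4*t*(ch t j).2 := by
  intro j
  induction j with
  | zero =>
    intro _
    refine ⟨one_pos, le_refl 1, ?_, ?_, ?_⟩
    · norm_num [ch]
    · norm_num [ch]
      nlinarith [pow_pos ht 3]
    · norm_num [ch]; ring
  | succ j ih =>
    intro hj1
    have hj : j ≤ k := le_trans (Nat.le_succ j) hj1
    obtain ⟨hx0, hx1, hslo, hsup, hinv⟩ := ih hj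
    -- abbreviations
    have hz0 : (0:ℝ) < ((j:ℝ)+1)*t := by positivity
    have hzk : ((j:ℝ)+1)*t ≤ 1/4 := by
      have : ((j:ℝ)+1) ≤ (k:ℝ)+1 := by exact_mod_cast Nat.succ_le_succ hj
      nlinarith [mul_le_mul_of_nonneg_right this ht.le]
    have hz'k : ((j:ℝ)+1)*t + t ≤ 1/4 := by
      have hcast : ((j:ℝ)+1) + 1 ≤ (k:ℝ)+1 := by exact_mod_cast Nat.succ_le_succ hj1
      nlinarith [mul_le_mul_of_nonneg_right hcast ht.le]
    have hs4 : 4*t ≤ (ch t j).2 := by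
      have : 4*t ≤ 4*(((j:ℝ)+1)*t) := by nlinarith [mul_le_mul_of_nonneg_right (show (1:ℝ) ≤ (j:ℝ)+1 by linarith [(Nat.cast_nonneg j : (0:ℝ) ≤ (j:ℝ))]) ht.le]
      linarith [hslo]
    have hs32 : (ch t j).2 ≤ 3/2 := by
      have := cap_lemma hz0 hzk
      linarith [hsup]
    -- apply the step lemma
    have hstep := step_main ht ht20 hs4 hs32 hx0 hx1 hinv
      (rfl : uF t (ch t j).1 (ch t j).2 = (ch t j).1 + 4/((ch t j).2)^2)
      (rfl : σF t (ch t j).1 (ch t j).2 = (ch t j).2 - 4*t/(uF t (ch t j).1 (ch t j).2)^2)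
      (rfl : xF t (ch t j).1 (ch t j).2 = uF t (ch t j).1 (ch t j).2 - 4/(σF t (ch t j).1 (ch t j).2)^2)
      (rfl : sF t (ch t j).1 (ch t j).2 = σF t (ch t j).1 (ch t j).2 + 4*t/(xF t (ch t j).1 (ch t j).2)^2)
    obtain ⟨hx'0, hx'1, hlow, hup, hA', -⟩ := hstep
    rw [ch_succ]
    refine ⟨hx'0, hx'1, ?_, ?_, hA'⟩
    · -- lower bound
      have : 4*(((j:ℝ)+1+1)*t) = 4*(((j:ℝ)+1)*t) + 4*t := by ring
      push_cast
      linarith [hlow, hslo]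
    · -- upper bound
      have hup2 := upper_prop ht (by nlinarith [mul_le_mul_of_nonneg_right (show (1:ℝ) ≤ (j:ℝ)+1 by linarith [(Nat.cast_nonneg j : (0:ℝ) ≤ (j:ℝ))]) ht.le] : t ≤ ((j:ℝ)+1)*t)
        hz'k (by linarith [hslo, hz0] : (0:ℝ) ≤ (ch t j).2) hsup hup
      push_cast
      have : ((j:ℝ)+1)*t + t = ((j:ℝ)+1+1)*t := by ring
      rw [this] at hup2
      exact hup2

end Pell14

namespace Pell14

/-- Existence of a parameter value where `s_k = 1`. -/
lemma exists_root (k : ℕ) (hk : 4 ≤ k) :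
    ∃ t : ℝ, (1/(6*((k:ℝ)+1)) ≤ t ∧ t ≤ 1/(4*((k:ℝ)+1))) ∧ (ch t k).2 = 1 := by
  have hk1 : (0:ℝ) < (k:ℝ)+1 := by positivity
  set tL : ℝ := 1/(6*((k:ℝ)+1)) with htL
  set tR : ℝ := 1/(4*((k:ℝ)+1)) with htR
  have htL0 : 0 < tL := by rw [htL]; positivity
  have htLR : tL ≤ tR := by
    rw [htL, htR]
    apply div_le_div_of_nonneg_left (by norm_num) (by positivity) (by linarith)
  have htR20 : tR ≤ 1/20 := by
    rw [htR]
    have h5 : (5:ℝ) ≤ (k:ℝ)+1 := by exact_mod_cast Nat.succ_le_succ hk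
    rw [div_le_div_iff₀ (by positivity) (by norm_num)]
    linarith
  have hmem : ∀ t ∈ Set.Icc tL tR, 0 < t ∧ t ≤ 1/20 ∧ ((k:ℝ)+1)*t ≤ 1/4 := by
    intro t ⟨h1, h2⟩
    refine ⟨lt_of_lt_of_le htL0 h1, le_trans h2 htR20, ?_⟩
    have : ((k:ℝ)+1)*t ≤ ((k:ℝ)+1)*tR := mul_le_mul_of_nonneg_left h2 (by positivity)
    have heq : ((k:ℝ)+1)*tR = 1/4 := by rw [htR]; field_simp
    linarith
  -- continuity of the chain on the interval
  have hcont : ∀ j, j ≤ k →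
      ContinuousOn (fun t => (ch t j).1) (Set.Icc tL tR) ∧
      ContinuousOn (fun t => (ch t j).2) (Set.Icc tL tR) := by
    intro j
    induction j with
    | zero =>
      intro _
      constructor
      · simpa [ch] using (continuousOn_const : ContinuousOn (fun _ : ℝ => (1:ℝ)) _)
      · simpa [ch] using ((continuous_mul_left (4:ℝ)).continuousOn :
          ContinuousOn (fun t : ℝ => 4*t) _)
    | succ j ih =>
      intro hj1
      have hj : j ≤ k := le_trans (Nat.le_succ j) hj1
      obtain ⟨hcx, hcs⟩ := ih hj
      -- pointwise facts
      have hpt : ∀ t ∈ Set.Icc tL tR,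
          0 < (ch t j).1 ∧ 4*t ≤ (ch t j).2 ∧ (ch t j).2 ≤ 3/2 ∧
          0 < uF t (ch t j).1 (ch t j).2 ∧ 0 < σF t (ch t j).1 (ch t j).2 ∧
          0 < xF t (ch t j).1 (ch t j).2 := by
        intro t htI
        obtain ⟨ht0, ht20, htk⟩ := hmem t htI
        obtain ⟨hx0, hx1, hslo, hsup, hinv⟩ := chain_bounds ht0 ht20 htk j hj
        have hz0 : (0:ℝ) < ((j:ℝ)+1)*t := by positivity
        have hzk : ((j:ℝ)+1)*t ≤ 1/4 := by
          have hle : ((j:ℝ)+1) ≤ (k:ℝ)+1 := by exact_mod_cast Nat.succ_le_succ hj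
          nlinarith [mul_le_mul_of_nonneg_right hle ht0.le]
        have hs4 : 4*t ≤ (ch t j).2 := by
          have : 4*t ≤ 4*(((j:ℝ)+1)*t) := by
            nlinarith [mul_le_mul_of_nonneg_right
              (show (1:ℝ) ≤ (j:ℝ)+1 by linarith [(Nat.cast_nonneg j : (0:ℝ) ≤ (j:ℝ))]) ht0.le]
          linarith [hslo]
        have hs32 : (ch t j).2 ≤ 3/2 := by
          have := cap_lemma hz0 hzk
          linarith [hsup]
        have hs0 : 0 < (ch t j).2 := by linarith [mul_pos (by norm_num : (0:ℝ)<4) ht0]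
        have hu0 : 0 < uF t (ch t j).1 (ch t j).2 := by
          have : (0:ℝ) < 4/((ch t j).2)^2 := by positivity
          show 0 < (ch t j).1 + 4/((ch t j).2)^2
          linarith
        have hstep := step_main ht0 ht20 hs4 hs32 hx0 hx1 hinv
          (rfl : uF t (ch t j).1 (ch t j).2 = _)
          (rfl : σF t (ch t j).1 (ch t j).2 = _)
          (rfl : xF t (ch t j).1 (ch t j).2 = _)
          (rfl : sF t (ch t j).1 (ch t j).2 = _)
        exact ⟨hx0, hs4, hs32, hu0, hstep.2.2.2.2.2, hstep.1⟩
      -- continuity of the intermediate quantities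
      have hcu : ContinuousOn (fun t => uF t (ch t j).1 (ch t j).2) (Set.Icc tL tR) := by
        simp only [uF]
        apply hcx.add
        apply ContinuousOn.div continuousOn_const (hcs.pow 2)
        intro t htI
        obtain ⟨ht0, -, -⟩ := hmem t htI
        obtain ⟨-, hs4, -, -, -, -⟩ := hpt t htI
        have : 0 < (ch t j).2 := by linarith [mul_pos (by norm_num : (0:ℝ)<4) ht0]
        exact pow_ne_zero 2 this.ne'
      have hcσ : ContinuousOn (fun t => σF t (ch t j).1 (ch t j).2) (Set.Icc tL tR) := by
        simp only [σF]
        apply hcs.sub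
        apply ContinuousOn.div ((continuous_const.mul continuous_id).continuousOn) (hcu.pow 2)
        intro t htI
        obtain ⟨-, -, -, hu0, -, -⟩ := hpt t htI
        exact pow_ne_zero 2 hu0.ne'
      have hcx' : ContinuousOn (fun t => xF t (ch t j).1 (ch t j).2) (Set.Icc tL tR) := by
        simp only [xF]
        apply hcu.sub
        apply ContinuousOn.div continuousOn_const (hcσ.pow 2)
        intro t htI
        obtain ⟨-, -, -, -, hσ0, -⟩ := hpt t htI
        exact pow_ne_zero 2 hσ0.ne'
      have hcs' : ContinuousOn (fun t => sF t (ch t j).1 (ch t j).2) (Set.Icc tL tR) := by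
        simp only [sF]
        apply hcσ.add
        apply ContinuousOn.div ((continuous_const.mul continuous_id).continuousOn) (hcx'.pow 2)
        intro t htI
        obtain ⟨-, -, -, -, -, hx'0⟩ := hpt t htI
        exact pow_ne_zero 2 hx'0.ne'
      constructor
      · simpa only [ch_succ] using hcx'
      · simpa only [ch_succ] using hcs'
  obtain ⟨-, hcontk⟩ := hcont k (le_refl k)
  -- endpoint values
  have hfL : (ch tL k).2 ≤ 22/27 := by
    obtain ⟨ht0, ht20, htk⟩ := hmem tL ⟨le_refl tL, htLR⟩
    obtain ⟨-, -, -, hsup, -⟩ := chain_bounds ht0 ht20 htk k (le_refl k)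
    have heq : ((k:ℝ)+1)*tL = 1/6 := by rw [htL]; field_simp
    rw [heq] at hsup
    norm_num at hsup ⊢
    linarith
  have hfR : 1 ≤ (ch tR k).2 := by
    obtain ⟨ht0, ht20, htk⟩ := hmem tR ⟨htLR, le_refl tR⟩
    obtain ⟨-, -, hslo, -, -⟩ := chain_bounds ht0 ht20 htk k (le_refl k)
    have heq : ((k:ℝ)+1)*tR = 1/4 := by rw [htR]; field_simp
    rw [heq] at hslo
    norm_num at hslo
    linarith
  -- intermediate value theorem
  have h1mem : (1:ℝ) ∈ Set.Icc ((fun t => (ch t k).2) tL) ((fun t => (ch t k).2) tR) := by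
    constructor
    · simpa using by linarith [hfL]
    · simpa using hfR
  obtain ⟨tstar, htstar, hval⟩ := intermediate_value_Icc htLR hcontk h1mem
  exact ⟨tstar, ⟨htstar.1, htstar.2⟩, hval⟩

end Pell14


namespace Pell14

/-- convergent 4-tuples: (pPrev, pCur, qPrev, qCur) -/
noncomputable def PQ (e : ℕ → ℝ) : ℕ → Polynomial ℝ × Polynomial ℝ × Polynomial ℝ × Polynomial ℝ
  | 0 => (1, X^3, 0, 1)
  | (n+1) => ((PQ e n).2.1,
              C (2/e (n+1)) * X * (PQ e n).2.1 + (PQ e n).1,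
              (PQ e n).2.2.2,
              C (2/e (n+1)) * X * (PQ e n).2.2.2 + (PQ e n).2.2.1)

/-- The three invariants of the continued-fraction ladder. -/
lemma ladder (t : ℝ) (e f : ℕ → ℝ) (he0 : e 0 = 0) (he1 : e 1 = 1)
    (hf0 : f 0 = 1) (hf1 : f 1 = t) (hfper : ∀ n, f (n+2) = f n)
    (N : ℕ) (hne : ∀ m, 1 ≤ m → m ≤ N → e m ≠ 0)
    (hrec : ∀ n, n+1 ≤ N → e (n+2) = -(e n) - 4*f (n+1)/(e (n+1))^2) :
    ∀ n, n ≤ N →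
      (((PQ e n).1)^2 - (X^6+X^2+C t) * ((PQ e n).2.2.1)^2
        = (-1:Polynomial ℝ)^n * (C (e n) * X^2 + C (f n)))
      ∧ (((PQ e n).2.1)^2 - (X^6+X^2+C t) * ((PQ e n).2.2.2)^2
        = (-1:Polynomial ℝ)^(n+1) * (C (e (n+1)) * X^2 + C (f (n+1))))
      ∧ (2*((PQ e n).2.1 * (PQ e n).1 - (X^6+X^2+C t) * ((PQ e n).2.2.2 * (PQ e n).2.2.1))
        = (-1:Polynomial ℝ)^n * (2*X^3 - C (e n) * C (e (n+1)) * X)) := by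
  intro n
  induction n with
  | zero =>
    intro _
    refine ⟨?_, ?_, ?_⟩
    · simp [PQ, he0, hf0]
    · simp only [PQ, he1, hf1, pow_one, map_one]
      ring
    · simp [PQ, he0]
  | succ n ih =>
    intro hn1
    have hn : n ≤ N := le_trans (Nat.le_succ n) hn1
    obtain ⟨hL, hJ, hK⟩ := ih hn
    have hene : e (n+1) ≠ 0 := hne (n+1) (Nat.le_add_left 1 n) hn1
    -- scalar facts
    have hc : (2/e (n+1)) * e (n+1) = 2 := div_mul_cancel₀ 2 hene
    have hrec' : e (n+2) = -(e n) - f (n+1)*(2/e (n+1))^2 := by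
      rw [hrec n hn1]
      field_simp
      ring
    have hKs : e (n+1) * e (n+2) = -(e n * e (n+1)) - 2*((2/e (n+1))*f (n+1)) := by
      rw [hrec']
      field_simp
    -- C-lifted scalar facts
    have hC2 : (C (2:ℝ) : Polynomial ℝ) = 2 := by simpa using map_ofNat (C : ℝ →+* Polynomial ℝ) 2
    have hCc : (C (2/e (n+1)) * C (e (n+1)) : Polynomial ℝ) = 2 := by
      rw [← C_mul, hc, hC2]
    have hCrec : (C (e (n+2)) : Polynomial ℝ)
        = -C (e n) - C (f (n+1)) * (C (2/e (n+1)))^2 := by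
      rw [hrec']
      simp [map_sub, map_neg, map_mul, map_pow]
    have hCKs : (C (e (n+1)) * C (e (n+2)) : Polynomial ℝ)
        = -(C (e n) * C (e (n+1))) - 2 * (C (2/e (n+1)) * C (f (n+1))) := by
      rw [← C_mul, hKs]
      simp only [map_sub, map_neg, map_mul, map_ofNat]
    have hCf : (C (f (n+2)) : Polynomial ℝ) = C (f n) := by rw [hfper]
    have hPQ : PQ e (n+1) = ((PQ e n).2.1,
        C (2/e (n+1)) * X * (PQ e n).2.1 + (PQ e n).1,
        (PQ e n).2.2.2,
        C (2/e (n+1)) * X * (PQ e n).2.2.2 + (PQ e n).2.2.1) := rfl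
    have hJ2 : ((PQ e n).2.1)^2 - (X^6+X^2+C t) * ((PQ e n).2.2.2)^2
        = -((-1:Polynomial ℝ)^n * (C (e (n+1)) * X^2 + C (f (n+1)))) := by
      rw [hJ, pow_succ]; ring
    have hpow2 : ((-1:Polynomial ℝ))^(n+1+1) = (-1)^n := by
      rw [pow_succ, pow_succ]; ring
    have hpow1 : ((-1:Polynomial ℝ))^(n+1) = -(-1:Polynomial ℝ)^n := by
      rw [pow_succ]; ring
    refine ⟨?_, ?_, ?_⟩
    · rw [hPQ]; exact hJ
    · rw [hPQ, hpow2, hfper]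
      show (C (2/e (n+1)) * X * (PQ e n).2.1 + (PQ e n).1)^2
          - (X^6+X^2+C t) * (C (2/e (n+1)) * X * (PQ e n).2.2.2 + (PQ e n).2.2.1)^2
        = (-1:Polynomial ℝ)^n * (C (e (n+2)) * X^2 + C (f n))
      linear_combination (C (2/e (n+1)) * X)^2 * hJ2 + (C (2/e (n+1)) * X) * hK + hL
        + (-((-1:Polynomial ℝ)^n*(C (2/e (n+1))*X^4 + C (e n)*X^2))) * hCc
        + (-((-1:Polynomial ℝ)^n*X^2)) * hCrec
    · rw [hPQ, hpow1]
      show 2*((C (2/e (n+1)) * X * (PQ e n).2.1 + (PQ e n).1) * (PQ e n).2.1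
          - (X^6+X^2+C t) * ((C (2/e (n+1)) * X * (PQ e n).2.2.2 + (PQ e n).2.2.1) * (PQ e n).2.2.2))
        = -(-1:Polynomial ℝ)^n * (2*X^3 - C (e (n+1)) * C (e (n+2)) * X)
      linear_combination (2*(C (2/e (n+1)) * X)) * hJ2 + hK
        + (-((-1:Polynomial ℝ)^n*2*X^3)) * hCc
        + (-((-1:Polynomial ℝ)^n*X)) * hCKs

end Pell14


namespace Pell14


lemma q_deg (e : ℕ → ℝ) (N : ℕ) (hne : ∀ m, 1 ≤ m → m ≤ N → e m ≠ 0) :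
    ∀ n, n ≤ N → ((PQ e n).2.2.2).degree = (n : WithBot ℕ)
      ∧ ((PQ e n).2.2.1).degree < (n : WithBot ℕ) := by
  intro n
  induction n with
  | zero =>
    intro _
    constructor
    · show (1 : Polynomial ℝ).degree = (0 : WithBot ℕ); simp
    · show (0 : Polynomial ℝ).degree < (0 : WithBot ℕ)
      simp [degree_zero]
  | succ n ih =>
    intro hn1
    obtain ⟨hdeg, hlt⟩ := ih (le_trans (Nat.le_succ n) hn1)
    have hcne : (2:ℝ)/e (n+1) ≠ 0 :=
      div_ne_zero two_ne_zero (hne (n+1) (Nat.le_add_left 1 n) hn1)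
    have hqne : (PQ e n).2.2.2 ≠ 0 := by
      intro h
      rw [h, degree_zero] at hdeg
      exact absurd hdeg.symm (by simp)
    have hmul : (C (2/e (n+1)) * X * (PQ e n).2.2.2).degree = ((n+1 : ℕ) : WithBot ℕ) := by
      rw [degree_mul, degree_mul, degree_C hcne, degree_X, hdeg]
      push_cast
      ring
    have hlt2 : ((PQ e n).2.2.1).degree < (C (2/e (n+1)) * X * (PQ e n).2.2.2).degree := by
      rw [hmul]
      exact lt_trans hlt (by exact_mod_cast WithBot.coe_lt_coe.mpr (Nat.lt_succ_self n))
    constructor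
    · show (C (2/e (n+1)) * X * (PQ e n).2.2.2 + (PQ e n).2.2.1).degree = _
      rw [degree_add_eq_left_of_degree_lt hlt2, hmul]
    · show ((PQ e n).2.2.2).degree < ((n+1 : ℕ) : WithBot ℕ)
      rw [hdeg]
      exact_mod_cast WithBot.coe_lt_coe.mpr (Nat.lt_succ_self n)

end Pell14


namespace Pell14


noncomputable def fseq (t : ℝ) : ℕ → ℝ := fun n => if n % 2 = 1 then t else 1

noncomputable def EE (t : ℝ) : ℕ → ℝ × ℝ
  | 0 => (0, 1)
  | (n+1) => ((EE t n).2, -(EE t n).1 - 4 * fseq t (n+1) / ((EE t n).2)^2)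

noncomputable def Ee (t : ℝ) (n : ℕ) : ℝ := (EE t n).1

lemma Ee_zero (t : ℝ) : Ee t 0 = 0 := rfl
lemma Ee_one (t : ℝ) : Ee t 1 = 1 := rfl
lemma Ee_rec (t : ℝ) (n : ℕ) :
    Ee t (n+2) = -(Ee t n) - 4 * fseq t (n+1) / (Ee t (n+1))^2 := rfl

lemma fseq_odd (t : ℝ) {n : ℕ} (h : n % 2 = 1) : fseq t n = t := by simp [fseq, h]
lemma fseq_even (t : ℝ) {n : ℕ} (h : n % 2 = 0) : fseq t n = 1 := by simp [fseq, h]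

/-- The `E`-sequence in terms of the chain. -/
lemma Ee_block (t : ℝ) : ∀ j : ℕ,
    Ee t (4*j+1) = (ch t j).1 ∧ Ee t (4*j+2) = -((ch t j).2) ∧
    Ee t (4*j+3) = -(uF t (ch t j).1 (ch t j).2) ∧
    Ee t (4*j+4) = σF t (ch t j).1 (ch t j).2 := by
  have key : ∀ j : ℕ, (Ee t (4*j+1) = (ch t j).1 ∧ Ee t (4*j+2) = -((ch t j).2)) →
      (Ee t (4*j+3) = -(uF t (ch t j).1 (ch t j).2) ∧
       Ee t (4*j+4) = σF t (ch t j).1 (ch t j).2) := by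
    intro j ⟨h1, h2⟩
    have e3 : Ee t (4*j+3) = -(uF t (ch t j).1 (ch t j).2) := by
      have hidx : 4*j+3 = (4*j+1)+2 := by omega
      rw [hidx, Ee_rec, h1]
      rw [show (4*j+1)+1 = 4*j+2 from by omega, h2]
      rw [fseq_even t (show (4*j+2) % 2 = 0 by omega)]
      show -(ch t j).1 - 4*1/(-(ch t j).2)^2 = -((ch t j).1 + 4/((ch t j).2)^2)
      rw [neg_sq]
      ring
    refine ⟨e3, ?_⟩
    have hidx : 4*j+4 = (4*j+2)+2 := by omega
    rw [hidx, Ee_rec, h2]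
    rw [show (4*j+2)+1 = 4*j+3 from by omega, e3]
    rw [fseq_odd t (show (4*j+3) % 2 = 1 by omega)]
    show -(-(ch t j).2) - 4*t/(-(uF t (ch t j).1 (ch t j).2))^2
      = (ch t j).2 - 4*t/(uF t (ch t j).1 (ch t j).2)^2
    rw [neg_sq]
    ring
  intro j
  induction j with
  | zero =>
    have h1 : Ee t 1 = (ch t 0).1 := rfl
    have h2 : Ee t 2 = -((ch t 0).2) := by
      rw [show (2:ℕ) = 0+2 from rfl, Ee_rec, Ee_zero, Ee_one]
      rw [fseq_odd t (show (0+1) % 2 = 1 by omega)]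
      show -0 - 4*t/1^2 = -(4*t)
      norm_num
    obtain ⟨h3, h4⟩ := key 0 ⟨h1, h2⟩
    exact ⟨h1, h2, h3, h4⟩
  | succ j ih =>
    obtain ⟨i1, i2, i3, i4⟩ := ih
    have h1 : Ee t (4*(j+1)+1) = (ch t (j+1)).1 := by
      have hidx : 4*(j+1)+1 = (4*j+3)+2 := by omega
      rw [hidx, Ee_rec, i3]
      rw [show (4*j+3)+1 = 4*j+4 from by omega, i4]
      rw [fseq_even t (show (4*j+4) % 2 = 0 by omega)]
      show -(-(uF t (ch t j).1 (ch t j).2)) - 4*1/(σF t (ch t j).1 (ch t j).2)^2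
        = (ch t (j+1)).1
      show _ = xF t (ch t j).1 (ch t j).2
      show _ = uF t (ch t j).1 (ch t j).2 - 4/(σF t (ch t j).1 (ch t j).2)^2
      ring
    have h2 : Ee t (4*(j+1)+2) = -((ch t (j+1)).2) := by
      have hidx : 4*(j+1)+2 = (4*j+4)+2 := by omega
      rw [hidx, Ee_rec, i4]
      rw [show (4*j+4)+1 = 4*(j+1)+1 from by omega, h1]
      rw [fseq_odd t (show (4*(j+1)+1) % 2 = 1 by omega)]
      show -(σF t (ch t j).1 (ch t j).2) - 4*t/((ch t (j+1)).1)^2 = -((ch t (j+1)).2)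
      show _ = -(sF t (ch t j).1 (ch t j).2)
      show _ = -(σF t (ch t j).1 (ch t j).2 + 4*t/(xF t (ch t j).1 (ch t j).2)^2)
      have : (ch t (j+1)).1 = xF t (ch t j).1 (ch t j).2 := rfl
      rw [this]
      ring
    obtain ⟨h3, h4⟩ := key (j+1) ⟨h1, h2⟩
    exact ⟨h1, h2, h3, h4⟩

end Pell14

namespace Pell14

/-- positivity of the chain and its intermediate quantities. -/
lemma chain_pos {k : ℕ} {t : ℝ} (ht : 0 < t) (ht20 : t ≤ 1/20)
    (htk : ((k:ℝ)+1)*t ≤ 1/4) : ∀ j, j ≤ k →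
    0 < (ch t j).1 ∧ 0 < (ch t j).2 ∧
    0 < uF t (ch t j).1 (ch t j).2 ∧ 0 < σF t (ch t j).1 (ch t j).2 := by
  intro j hj
  obtain ⟨hx0, hx1, hslo, hsup, hinv⟩ := chain_bounds ht ht20 htk j hj
  have hz0 : (0:ℝ) < ((j:ℝ)+1)*t := by positivity
  have hzk : ((j:ℝ)+1)*t ≤ 1/4 := by
    have hle : ((j:ℝ)+1) ≤ (k:ℝ)+1 := by exact_mod_cast Nat.succ_le_succ hj
    nlinarith [mul_le_mul_of_nonneg_right hle ht.le]
  have hs4 : 4*t ≤ (ch t j).2 := by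
    have : 4*t ≤ 4*(((j:ℝ)+1)*t) := by
      nlinarith [mul_le_mul_of_nonneg_right
        (show (1:ℝ) ≤ (j:ℝ)+1 by linarith [(Nat.cast_nonneg j : (0:ℝ) ≤ (j:ℝ))]) ht.le]
    linarith [hslo]
  have hs32 : (ch t j).2 ≤ 3/2 := by
    have := cap_lemma hz0 hzk
    linarith [hsup]
  have hs0 : 0 < (ch t j).2 := by linarith [mul_pos (by norm_num : (0:ℝ)<4) ht]
  have hu0 : 0 < uF t (ch t j).1 (ch t j).2 := by
    have : (0:ℝ) < 4/((ch t j).2)^2 := by positivity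
    show 0 < (ch t j).1 + 4/((ch t j).2)^2
    linarith
  have hstep := step_main ht ht20 hs4 hs32 hx0 hx1 hinv
    (rfl : uF t (ch t j).1 (ch t j).2 = _)
    (rfl : σF t (ch t j).1 (ch t j).2 = _)
    (rfl : xF t (ch t j).1 (ch t j).2 = _)
    (rfl : sF t (ch t j).1 (ch t j).2 = _)
  exact ⟨hx0, hs0, hu0, hstep.2.2.2.2.2⟩

/-- From a root of `s_k = 1` we get a real solution of the halved equation. -/
lemma solvable_of_root {k : ℕ} {t : ℝ} (ht : 0 < t) (ht20 : t ≤ 1/20)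
    (htk : ((k:ℝ)+1)*t ≤ 1/4) (hroot : (ch t k).2 = 1) :
    ∃ p q : Polynomial ℝ, q ≠ 0 ∧ p^2 - (X^6+X^2+C t)*q^2 = 1 - X^2 := by
  set N : ℕ := 4*k+1 with hN
  -- nonvanishing of the E-sequence
  have hne : ∀ m, 1 ≤ m → m ≤ N → Ee t m ≠ 0 := by
    intro m hm1 hmN
    set j : ℕ := (m-1)/4 with hjdef
    have hcases : m = 4*j+1 ∨ m = 4*j+2 ∨ m = 4*j+3 ∨ m = 4*j+4 := by omega
    have hjk : j ≤ k := by omega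
    obtain ⟨b1, b2, b3, b4⟩ := Ee_block t j
    obtain ⟨p1, p2, p3, p4⟩ := chain_pos ht ht20 htk j hjk
    rcases hcases with h | h | h | h <;> rw [h]
    · rw [b1]; exact ne_of_gt p1
    · rw [b2]; exact ne_of_lt (neg_lt_zero.mpr p2)
    · rw [b3]; exact ne_of_lt (neg_lt_zero.mpr p3)
    · rw [b4]; exact ne_of_gt p4
  have hrec : ∀ n, n+1 ≤ N → Ee t (n+2) = -(Ee t n) - 4*fseq t (n+1)/(Ee t (n+1))^2 :=
    fun n _ => Ee_rec t n
  have hlad := (ladder t (Ee t) (fseq t) (Ee_zero t) (Ee_one t)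
    (fseq_even t (by norm_num)) (fseq_odd t (by norm_num))
    (fun n => by
      show fseq t (n+2) = fseq t n
      unfold fseq
      have : (n+2) % 2 = n % 2 := by omega
      rw [this])
    N hne hrec N (le_refl N)).2.1
  -- evaluate the right-hand side
  have hE : Ee t (N+1) = -1 := by
    have : N+1 = 4*k+2 := by omega
    rw [this, (Ee_block t k).2.1, hroot]
  have hf : fseq t (N+1) = 1 := by
    apply fseq_even
    omega
  have hpow : ((-1 : Polynomial ℝ))^(N+1) = 1 := by
    apply Even.neg_one_pow
    exact ⟨2*k+1, by omega⟩
  rw [hE, hf, hpow] at hlad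
  refine ⟨(PQ (Ee t) N).2.1, (PQ (Ee t) N).2.2.2, ?_, ?_⟩
  · -- q ≠ 0
    have hdeg := (q_deg (Ee t) N hne N (le_refl N)).1
    intro h
    rw [h, degree_zero] at hdeg
    exact absurd hdeg.symm (by simp)
  · rw [hlad]
    simp [map_neg, map_one]
    ring

end Pell14

namespace Pell14

/-- Passing from the real halved solution to a complex solution of the original equation. -/
lemma complex_solution {t : ℝ}
    (h : ∃ p q : Polynomial ℝ, q ≠ 0 ∧ p^2 - (X^6+X^2+C t)*q^2 = 1 - X^2) :
    ∃ A B : Polynomial ℂ, B ≠ 0 ∧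
      A^2 - (X^12 + X^4 + C ((t:ℂ))) * B^2 = X^4 - 1 := by
  obtain ⟨p, q, hq, heq⟩ := h
  set φ : ℝ →+* ℂ := algebraMap ℝ ℂ with hφ
  set P : Polynomial ℂ := (p.map φ).comp (X^2) with hP
  set Q : Polynomial ℂ := (q.map φ).comp (X^2) with hQ
  have hkey : P^2 - (X^12 + X^4 + C ((t:ℂ))) * Q^2 = 1 - X^4 := by
    have h1 := congrArg (fun r : Polynomial ℝ => (r.map φ).comp (X^2 : Polynomial ℂ)) heq
    simp only [Polynomial.map_sub, Polynomial.map_mul, Polynomial.map_pow,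
      Polynomial.map_add, Polynomial.map_one, map_X, map_C,
      sub_comp, mul_comp, pow_comp, add_comp, X_comp, C_comp, one_comp] at h1
    rw [hP, hQ]
    rw [show ((X:Polynomial ℂ)^2)^6 = X^12 from by ring,
        show ((X:Polynomial ℂ)^2)^2 = X^4 from by ring] at h1
    convert h1 using 2
    simp [hφ]
  have hQne : Q ≠ 0 := by
    rw [hQ]
    intro hzero
    rw [Polynomial.comp_eq_zero_iff] at hzero
    rcases hzero with h1 | ⟨-, h2⟩
    · exact hq ((Polynomial.map_eq_zero_iff φ.injective).mp h1)
    · have : ((X:Polynomial ℂ)^2).natDegree = 2 := by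
        simp [natDegree_pow]
      rw [h2] at this
      simp at this
  refine ⟨C Complex.I * P, C Complex.I * Q, ?_, ?_⟩
  · exact mul_ne_zero (by simp [Complex.I_ne_zero]) hQne
  · have hI : (C Complex.I : Polynomial ℂ)^2 = -1 := by
      rw [← C_pow, Complex.I_sq, map_neg, map_one]
    calc (C Complex.I * P)^2 - (X^12 + X^4 + C ((t:ℂ))) * (C Complex.I * Q)^2
        = (C Complex.I)^2 * (P^2 - (X^12 + X^4 + C ((t:ℂ))) * Q^2) := by ring
      _ = (-1) * (1 - X^4) := by rw [hI, hkey]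
      _ = X^4 - 1 := by ring

end Pell14

namespace Pell14

/-- Main production: for every `m` there is a parameter in a prescribed window. -/
noncomputable def T (m : ℕ) : ℝ :=
  Classical.choose (exists_root (5*2^m) (by have h := Nat.one_le_two_pow (n := m); omega))

lemma T_spec (m : ℕ) :
    (1/(6*(((5*2^m : ℕ):ℝ)+1)) ≤ T m ∧ T m ≤ 1/(4*(((5*2^m : ℕ):ℝ)+1))) ∧
    (ch (T m) (5*2^m)).2 = 1 :=
  Classical.choose_spec (exists_root (5*2^m) (by have h := Nat.one_le_two_pow (n := m); omega))

lemma T_mem (m : ℕ) :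
    ∃ A B : Polynomial ℂ, B ≠ 0 ∧
      A^2 - (X^12 + X^4 + C ((T m : ℂ))) * B^2 = X^4 - 1 := by
  obtain ⟨⟨h1, h2⟩, hroot⟩ := T_spec m
  have hK : (20:ℝ) ≤ 4*(((5*2^m : ℕ):ℝ)+1) := by
    have : (5:ℝ) ≤ ((5*2^m : ℕ):ℝ) := by
      have : (5:ℕ) ≤ 5*2^m := Nat.le_mul_of_pos_right 5 (by positivity)
      exact_mod_cast this
    linarith
  have hKpos : (0:ℝ) < ((5*2^m : ℕ):ℝ)+1 := by positivity
  have ht0 : 0 < T m := lt_of_lt_of_le (by positivity) h1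
  have ht20 : T m ≤ 1/20 := by
    apply le_trans h2
    apply div_le_div_of_nonneg_left (by norm_num) (by norm_num) hK
  have htk : (((5*2^m : ℕ):ℝ)+1) * T m ≤ 1/4 := by
    have := mul_le_mul_of_nonneg_left h2 hKpos.le
    have heq : (((5*2^m : ℕ):ℝ)+1) * (1/(4*(((5*2^m : ℕ):ℝ)+1))) = 1/4 := by
      field_simp
    linarith
  exact complex_solution (solvable_of_root ht0 ht20 htk hroot)

lemma T_strictAnti : StrictAnti T := by
  apply strictAnti_nat_of_succ_lt
  intro m
  obtain ⟨⟨hL1, hR1⟩, -⟩ := T_spec (m+1)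
  obtain ⟨⟨hL2, hR2⟩, -⟩ := T_spec m
  have key : 6*(((5*2^m : ℕ):ℝ)+1) < 4*(((5*2^(m+1) : ℕ):ℝ)+1) := by
    push_cast
    have h1 : (1:ℝ) ≤ (2:ℝ)^m := by exact_mod_cast (Nat.one_le_two_pow (n := m))
    rw [pow_succ]
    nlinarith
  have h0 : (0:ℝ) < 6*(((5*2^m : ℕ):ℝ)+1) := by positivity
  have : 1/(4*(((5*2^(m+1) : ℕ):ℝ)+1)) < 1/(6*(((5*2^m : ℕ):ℝ)+1)) := by
    apply one_div_lt_one_div_of_lt h0 key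
  calc T (m+1) ≤ 1/(4*(((5*2^(m+1) : ℕ):ℝ)+1)) := hR1
    _ < 1/(6*(((5*2^m : ℕ):ℝ)+1)) := this
    _ ≤ T m := hL2

end Pell14

open Pell14 in
/-- The set of complex numbers `t₀` for which there exist
`A, B ∈ ℂ[X]` with `B ≠ 0` satisfying `A² − (X¹² + X⁴ + t₀)·B² = X⁴ − 1` is infinite. -/
theorem infinite_solvable_specializations_degree_twelve :
    {t₀ : ℂ | ∃ A B : Polynomial ℂ, B ≠ 0 ∧
      A ^ 2 - (X ^ 12 + X ^ 4 + C t₀) * B ^ 2 = X ^ 4 - 1}.Infinite := by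
  have hinj : Function.Injective (fun m : ℕ => ((T m : ℂ) : ℂ)) := by
    intro a b hab
    simp only at hab
    exact T_strictAnti.injective (Complex.ofReal_injective hab)
  have hmem : ∀ m : ℕ, ((T m : ℂ) : ℂ) ∈ {t₀ : ℂ | ∃ A B : Polynomial ℂ, B ≠ 0 ∧
      A ^ 2 - (X ^ 12 + X ^ 4 + C t₀) * B ^ 2 = X ^ 4 - 1} := by
    intro m
    simp only [Set.mem_setOf_eq]
    obtain ⟨A, B, hB, hAB⟩ := T_mem m
    exact ⟨A, B, hB, hAB⟩
  exact Set.infinite_of_injective_forall_mem hinj hmem
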